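/- Let ξ be a positive integer and (T,𝒳) a ξ-nice tree-cut decomposition of a graph G. Then either (1) there exists an edge e = t1t2 of T such that for each i ∈ {1,2}, at least |E(G)|/3 edges of G are incident with A_{e,t_i} and G[A_{e,t_i}] is a ξ-nice graph with at least |E(G)|/3 − ξ edges, or (2) there exists a node t* of T such that either G[X_{t*}] has at least |E(G)|/9 edges, or the components of T − t* can be partitioned into two classes U1, U2 such that for each i, at least 2|E(G)|/9 edges of G are incident with the union of the bags over components in U_i. -/

import Mathlib

/-- A finite multigraph (loops and parallel edges allowed): each edge in `E`
has an unordered pair of endpoints in `V`. -/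
structure Multigraph (V E : Type) where
  ends : E → Sym2 V

namespace Multigraph

variable {V E : Type}

/-- The edge `e` has an end in the vertex set `A`. -/
def incident (G : Multigraph V E) (A : Set V) (e : E) : Prop :=
  ∃ x ∈ G.ends e, x ∈ A

/-- The edge `e` has one end in `A` and one end in `B`. -/
def crosses (G : Multigraph V E) (A B : Set V) (e : E) : Prop :=
  G.incident A e ∧ G.incident B e

/-- The order of the edge-cut `[A,B]`: the number of edges with one end in `A`
and one end in `B`. -/
noncomputable def cutOrder (G : Multigraph V E) (A B : Set V) : ℕ :=
  {e | G.crosses A B e}.ncard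

/-- `[A,B]` is an edge-cut of `G`: an ordered pair of disjoint vertex sets
covering all vertices. -/
def IsCut (G : Multigraph V E) (A B : Set V) : Prop :=
  Disjoint A B ∧ A ∪ B = Set.univ

end Multigraph

/-- A tree-cut decomposition of `G`: a (finite) tree `T` together with pairwise
disjoint bags partitioning `V(G)`. -/
structure TreeCutDecomp {V E : Type} (G : Multigraph V E) (T : Type) where
  tree : SimpleGraph T
  isTree : tree.IsTree
  finite : Finite T
  bag : T → Set V
  disjoint_bags : ∀ s t : T, s ≠ t → Disjoint (bag s) (bag t)
  cover : ∀ v : V, ∃ t : T, v ∈ bag t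

namespace TreeCutDecomp

variable {V E T : Type} {G : Multigraph V E}

/-- The set of nodes of the component of `T - t₁t₂` containing `t₁`. -/
def side (D : TreeCutDecomp G T) (t₁ t₂ : T) : Set T :=
  {s | Relation.ReflTransGen
    (fun x y => D.tree.Adj x y ∧ ¬(x = t₁ ∧ y = t₂) ∧ ¬(x = t₂ ∧ y = t₁)) t₁ s}

/-- The union of the bags over the component of `T - t₁t₂` containing `t₁`. -/
def sideBags (D : TreeCutDecomp G T) (t₁ t₂ : T) : Set V :=
  ⋃ s ∈ D.side t₁ t₂, D.bag s

/-- The adhesion set of the tree edge `t₁t₂`: the edges of `G` with one end in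
the bags on the `t₁` side and one end in the bags on the `t₂` side. -/
def adhEdges (D : TreeCutDecomp G T) (t₁ t₂ : T) : Set E :=
  {e | G.crosses (D.sideBags t₁ t₂) (D.sideBags t₂ t₁) e}

/-- `x` and `y` are joined by a path of `T` avoiding the node set `C`. -/
def compRel (D : TreeCutDecomp G T) (C : Set T) (x y : T) : Prop :=
  Relation.ReflTransGen (fun a b => D.tree.Adj a b ∧ a ∉ C ∧ b ∉ C) x y

/-- The union of the bags over the component of `T - C` containing `s`. -/
def compBags (D : TreeCutDecomp G T) (C : Set T) (s : T) : Set V :=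
  ⋃ s' ∈ {s' | D.compRel C s s'}, D.bag s'

/-- The edges of the torso at `C`, viewed as edges of `G`: those edges having
no component of `T - C` whose bags contain all their ends. -/
def torsoEdges (D : TreeCutDecomp G T) (C : Set T) : Set E :=
  {e | ¬ ∃ s : T, s ∉ C ∧ ∀ x ∈ G.ends e, x ∈ D.compBags C s}

/-- `x` and `y` are joined in the forest obtained from `T` by deleting all edges
whose adhesion set has fewer than `θ` elements. -/
def cellRel (D : TreeCutDecomp G T) (θ : ℕ) (x y : T) : Prop :=
  Relation.ReflTransGen (fun a b => D.tree.Adj a b ∧ θ ≤ (D.adhEdges a b).ncard) x y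

/-- A pseudo-`θ`-cell: a component of the forest obtained from `T` by deleting
all edges whose adhesion set has size less than `θ`. -/
def IsPseudoCell (D : TreeCutDecomp G T) (θ : ℕ) (C : Set T) : Prop :=
  ∃ t : T, C = {s | D.cellRel θ t s}

/-- A `θ`-cell: a pseudo-`θ`-cell whose torso has at least `θ` edges. -/
def IsCell (D : TreeCutDecomp G T) (θ : ℕ) (C : Set T) : Prop :=
  D.IsPseudoCell θ C ∧ θ ≤ (D.torsoEdges C).ncard

/-- `(T,𝒳)` is `θ`-smooth. -/
def Smooth (D : TreeCutDecomp G T) (θ : ℕ) : Prop :=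
  ∀ C : Set T, (D.IsCell θ C ∨ ∃ t : T, C = {t}) →
    ∀ Y Z : Set E, Y ⊆ D.torsoEdges C → Z ⊆ D.torsoEdges C →
      Y.ncard = Z.ncard → Y.ncard ≤ θ →
      ¬ ∃ A B : Set V, G.IsCut A B ∧ G.cutOrder A B < Y.ncard ∧
        (∀ e ∈ Y, G.incident A e) ∧ (∀ e ∈ Z, G.incident B e)

end TreeCutDecomp

/-- A tree-cut decomposition is `ξ`-nice if it has adhesion at most `ξ` and for
every node `t`, the torso at `t` is obtained from a graph on at most `ξ`
vertices by attaching leaves adjacent to `X_t`.  (Components of `T - t`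
correspond to the neighbours of `t` in the tree, hence to the peripheral
vertices of the torso at `t`; a peripheral vertex is an attached leaf if its
adhesion set consists of a single edge whose other end lies in `X_t`.) -/
def TreeCutDecomp.IsNice {V E T : Type} {G : Multigraph V E}
    (D : TreeCutDecomp G T) (ξ : ℕ) : Prop :=
  (∀ a b : T, D.tree.Adj a b → (D.adhEdges a b).ncard ≤ ξ) ∧
  ∀ t : T, ∃ S ⊆ D.tree.neighborSet t,
    (∀ s ∈ S, (D.adhEdges t s).ncard = 1 ∧
      ∀ e ∈ D.adhEdges t s, G.incident (D.bag t) e) ∧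
    (D.bag t).ncard + ((D.tree.neighborSet t) \ S).ncard ≤ ξ

/-- A graph is `ξ`-nice if it admits a `ξ`-nice tree-cut decomposition. -/
def IsNiceGraph {V E : Type} (ξ : ℕ) (G : Multigraph V E) : Prop :=
  ∃ (T : Type) (D : TreeCutDecomp G T), D.IsNice ξ

/-- The subgraph of `G` induced by a vertex set `S`. -/
noncomputable def Multigraph.induce {V E : Type} (G : Multigraph V E)
    (S : Set V) : Multigraph {v : V // v ∈ S} {e : E // ∀ x ∈ G.ends e, x ∈ S} where
  ends e := s(⟨(G.ends e.1).out.1, e.2 _ (Sym2.out_fst_mem _)⟩,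
              ⟨(G.ends e.1).out.2, e.2 _ (Sym2.out_snd_mem _)⟩)

/-! ### Auxiliary lemmas -/

namespace NiceAux

open TreeCutDecomp

variable {V E T : Type} {G : Multigraph V E} (D : TreeCutDecomp G T)

/-- The step relation used in `side`. It is the same for `side t₁ t₂` and `side t₂ t₁`. -/
abbrev srel (D : TreeCutDecomp G T) (t₁ t₂ : T) : T → T → Prop :=
  fun x y => D.tree.Adj x y ∧ ¬(x = t₁ ∧ y = t₂) ∧ ¬(x = t₂ ∧ y = t₁)

lemma srel_symm {t₁ t₂ : T} : Symmetric (srel D t₁ t₂) := by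
  rintro x y ⟨hadj, h1, h2⟩
  exact ⟨hadj.symm, fun ⟨a, b⟩ => h2 ⟨b, a⟩, fun ⟨a, b⟩ => h1 ⟨b, a⟩⟩

lemma srel_swap {t₁ t₂ : T} : srel D t₁ t₂ = srel D t₂ t₁ := by
  funext x y
  simp only [srel, eq_iff_iff]
  tauto

lemma mem_side_iff {t₁ t₂ u : T} :
    u ∈ D.side t₁ t₂ ↔ Relation.ReflTransGen (srel D t₁ t₂) t₁ u := Iff.rfl

lemma side_refl (t₁ t₂ : T) : t₁ ∈ D.side t₁ t₂ := Relation.ReflTransGen.refl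

lemma side_step {t₁ t₂ s u : T} (hs : s ∈ D.side t₁ t₂) (h : srel D t₁ t₂ s u) :
    u ∈ D.side t₁ t₂ := Relation.ReflTransGen.tail hs h

lemma not_mem_side {t₁ t₂ : T} (h : D.tree.Adj t₁ t₂) : t₂ ∉ D.side t₁ t₂ := by
  intro hmem
  have hbridge : D.tree.IsBridge s(t₁, t₂) := by
    have := D.isTree.IsAcyclic
    exact (SimpleGraph.isAcyclic_iff_forall_adj_isBridge.mp this) h
  rw [SimpleGraph.isBridge_iff] at hbridge
  apply hbridge
  have : Relation.ReflTransGen (D.tree.deleteEdges {s(t₁, t₂)}).Adj t₁ t₂ := by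
    refine Relation.ReflTransGen.mono ?_ _ _ hmem
    rintro x y ⟨hadj, h1, h2⟩
    rw [SimpleGraph.deleteEdges_adj]
    refine ⟨hadj, ?_⟩
    intro hmemedge
    simp only [Set.mem_singleton_iff, Sym2.eq_iff] at hmemedge
    tauto
  have := (SimpleGraph.reachable_iff_reflTransGen _ _).mpr this
  simpa [SimpleGraph.deleteEdges] using this

lemma mem_side_or {t₁ t₂ : T} (h : D.tree.Adj t₁ t₂) (u : T) :
    u ∈ D.side t₁ t₂ ∪ D.side t₂ t₁ := by
  have hreach : D.tree.Reachable t₁ u := D.isTree.isConnected t₁ u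
  have hrtg : Relation.ReflTransGen D.tree.Adj t₁ u :=
    (SimpleGraph.reachable_iff_reflTransGen _ _).mp hreach
  clear hreach
  induction hrtg with
  | refl => exact Or.inl (side_refl D t₁ t₂)
  | tail hxy hadj ih =>
    rename_i x y
    by_cases h1 : x = t₁ ∧ y = t₂
    · right; rw [h1.2]; exact side_refl D t₂ t₁
    · by_cases h2 : x = t₂ ∧ y = t₁
      · left; rw [h2.2]; exact side_refl D t₁ t₂
      · rcases ih with hx | hx
        · exact Or.inl (side_step D hx ⟨hadj, h1, h2⟩)
        · exact Or.inr (side_step D hx ⟨hadj, h2, h1⟩)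

lemma side_not_mem_other {t₁ t₂ u : T} (h : D.tree.Adj t₁ t₂)
    (h1 : u ∈ D.side t₁ t₂) (h2 : u ∈ D.side t₂ t₁) : False := by
  have h2' : Relation.ReflTransGen (srel D t₁ t₂) t₂ u := by
    rw [mem_side_iff, srel_swap] at h2; exact h2
  have : Relation.ReflTransGen (srel D t₁ t₂) u t₂ :=
    by haveI : Std.Symm (srel D t₁ t₂) := ⟨fun a b h => srel_symm D h⟩; exact Std.Symm.symm _ _ h2'
  exact not_mem_side D h (Relation.ReflTransGen.trans h1 this)

lemma mem_side_of_adj {t₁ t₂ u : T} (h : D.tree.Adj t₂ u) (hu : u ≠ t₁) :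
    u ∈ D.side t₂ t₁ := by
  refine side_step D (side_refl D t₂ t₁) ⟨h, ?_, ?_⟩
  · rintro ⟨-, rfl⟩; exact hu rfl
  · rintro ⟨-, rfl⟩; exact (D.tree.irrefl h)

/-- Nodes adjacent across the boundary of a side: the only boundary edge is `t₂t₁`. -/
lemma side_boundary {t₁ t₂ v w : T} (h : D.tree.Adj t₁ t₂)
    (hv : v ∈ D.side t₂ t₁) (hadj : D.tree.Adj v w) (hw : w ∉ D.side t₂ t₁) :
    v = t₂ ∧ w = t₁ := by
  by_contra hcon
  apply hw
  refine side_step D hv ⟨hadj, hcon, ?_⟩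
  rintro ⟨hv1, -⟩
  exact side_not_mem_other D h (hv1 ▸ side_refl D t₁ t₂) hv

lemma side_mono {t₁ t₂ c : T} (h : D.tree.Adj t₁ t₂) (hc : D.tree.Adj t₂ c) (hct : c ≠ t₁) :
    D.side c t₂ ⊆ D.side t₂ t₁ := by
  intro x hx
  rw [mem_side_iff] at hx
  induction hx with
  | refl => exact mem_side_of_adj D hc hct
  | tail hxy hstep ih =>
    rename_i p q
    have hpq : p ∈ D.side c t₂ := hxy
    have hq : q ∈ D.side c t₂ := side_step D hpq hstep
    have hqt₂ : q ≠ t₂ := fun hh => not_mem_side D hc.symm (hh ▸ hq)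
    have hpt₂ : p ≠ t₂ := fun hh => not_mem_side D hc.symm (hh ▸ hpq)
    have hpt₁ : p ≠ t₁ := by
      intro hh
      exact side_not_mem_other D h (hh ▸ side_refl D t₁ t₂) ih
    refine side_step D ih ⟨hstep.1, ?_, ?_⟩
    · exact fun hh => hpt₂ hh.1
    · exact fun hh => hpt₁ hh.1

end NiceAux

namespace NiceAux

open TreeCutDecomp

variable {V E T : Type} {G : Multigraph V E} (D : TreeCutDecomp G T)

lemma compRel_eq_side {t s : T} (h : D.tree.Adj t s) :
    {s' | D.compRel {t} s s'} = D.side s t := by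
  ext x
  simp only [Set.mem_setOf_eq]
  constructor
  · intro hx
    refine Relation.ReflTransGen.mono ?_ _ _ hx
    rintro a b ⟨hadj, ha, hb⟩
    simp only [Set.mem_singleton_iff] at ha hb
    exact ⟨hadj, fun hh => hb hh.2, fun hh => ha hh.1⟩
  · intro hx
    rw [mem_side_iff] at hx
    induction hx with
    | refl => exact Relation.ReflTransGen.refl
    | tail hxy hstep ih =>
      rename_i p q
      have hp : p ∈ D.side s t := hxy
      have hq : q ∈ D.side s t := side_step D hp hstep
      have hpt : p ≠ t := fun hh => not_mem_side D h.symm (hh ▸ hp)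
      have hqt : q ≠ t := fun hh => not_mem_side D h.symm (hh ▸ hq)
      exact Relation.ReflTransGen.tail ih
        ⟨hstep.1, by simpa using hpt, by simpa using hqt⟩

lemma exists_comp {t u : T} (hu : u ≠ t) :
    ∃ s, D.tree.Adj t s ∧ D.compRel {t} s u := by
  have hreach : D.tree.Reachable t u := D.isTree.isConnected t u
  have hrtg : Relation.ReflTransGen D.tree.Adj t u :=
    (SimpleGraph.reachable_iff_reflTransGen _ _).mp hreach
  clear hreach
  have key : ∀ w, Relation.ReflTransGen D.tree.Adj t w →
      w = t ∨ ∃ s, D.tree.Adj t s ∧ D.compRel {t} s w := by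
    intro w hw
    induction hw with
    | refl => exact Or.inl rfl
    | tail hxy hadj ih =>
      rename_i x y
      by_cases hyt : y = t
      · exact Or.inl hyt
      · right
        rcases ih with rfl | ⟨s, hs, hrel⟩
        · exact ⟨y, hadj, Relation.ReflTransGen.refl⟩
        · have hxt : x ∉ ({t} : Set T) := by
            intro hh
            simp only [Set.mem_singleton_iff] at hh
            subst hh
            -- x = t : then compRel {t} s t ; t is excluded unless s = t...
            rcases (Relation.ReflTransGen.cases_tail hrel) with rfl | ⟨u', -, hstep⟩
            · exact D.tree.irrefl hs
            · exact hstep.2.2 rfl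
          exact ⟨s, hs, Relation.ReflTransGen.tail hrel ⟨hadj, hxt, by simpa using hyt⟩⟩
  rcases key u hrtg with rfl | hres
  · exact absurd rfl hu
  · exact hres

lemma bag_subset_sideBags {t₁ t₂ u : T} (hu : u ∈ D.side t₁ t₂) :
    D.bag u ⊆ D.sideBags t₁ t₂ := by
  intro x hx
  exact Set.mem_biUnion hu hx

lemma mem_sideBags {t₁ t₂ : T} {x : V} :
    x ∈ D.sideBags t₁ t₂ ↔ ∃ u ∈ D.side t₁ t₂, x ∈ D.bag u := by
  simp [TreeCutDecomp.sideBags]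

lemma sideBags_union {t₁ t₂ : T} (h : D.tree.Adj t₁ t₂) :
    D.sideBags t₁ t₂ ∪ D.sideBags t₂ t₁ = Set.univ := by
  ext x
  simp only [Set.mem_univ, iff_true, Set.mem_union]
  obtain ⟨u, hu⟩ := D.cover x
  rcases mem_side_or D h u with hs | hs
  · exact Or.inl (bag_subset_sideBags D hs hu)
  · exact Or.inr (bag_subset_sideBags D hs hu)

lemma sideBags_disj {t₁ t₂ : T} (h : D.tree.Adj t₁ t₂) {x : V}
    (h1 : x ∈ D.sideBags t₁ t₂) (h2 : x ∈ D.sideBags t₂ t₁) : False := by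
  rw [mem_sideBags] at h1 h2
  obtain ⟨u, hu, hxu⟩ := h1
  obtain ⟨w, hw, hxw⟩ := h2
  by_cases huw : u = w
  · subst huw
    exact side_not_mem_other D h hu hw
  · exact (D.disjoint_bags u w huw).le_bot ⟨hxu, hxw⟩ |>.elim

/-- Bags of the components of `T - t₂` other than the `t₁` one exactly fill
`sideBags t₂ t₁ \ bag t₂`. -/
lemma biUnion_compBags_eq {t₁ t₂ : T} (h : D.tree.Adj t₁ t₂) :
    (⋃ s ∈ (D.tree.neighborSet t₂ \ {t₁} : Set T), D.compBags {t₂} s)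
      = D.sideBags t₂ t₁ \ D.bag t₂ := by
  ext x
  simp only [Set.mem_iUnion, Set.mem_diff, Set.mem_singleton_iff]
  constructor
  · rintro ⟨s, ⟨hs, hst⟩, hx⟩
    rw [SimpleGraph.mem_neighborSet] at hs
    have hx' : x ∈ ⋃ s' ∈ {s' | D.compRel {t₂} s s'}, D.bag s' := hx
    rw [compRel_eq_side D hs] at hx'
    simp only [Set.mem_iUnion] at hx'
    obtain ⟨u, hu, hxu⟩ := hx'
    have husub : u ∈ D.side t₂ t₁ := side_mono D h hs hst hu
    refine ⟨bag_subset_sideBags D husub hxu, ?_⟩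
    intro hxbag
    have hut : u ≠ t₂ := fun hh => not_mem_side D hs.symm (hh ▸ hu)
    exact (D.disjoint_bags u t₂ hut).le_bot ⟨hxu, hxbag⟩
  · rintro ⟨hx, hxbag⟩
    rw [mem_sideBags] at hx
    obtain ⟨u, hu, hxu⟩ := hx
    have hut : u ≠ t₂ := by
      intro hh; rw [hh] at hxu; exact hxbag hxu
    obtain ⟨s, hs, hrel⟩ := exists_comp D hut
    refine ⟨s, ⟨hs, ?_⟩, ?_⟩
    · -- s ≠ t₁ : otherwise u would lie on the other side
      intro hh
      rw [hh] at hrel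
      have : u ∈ D.side t₁ t₂ := by
        have h2 : u ∈ {s' | D.compRel {t₂} t₁ s'} := hrel
        rwa [compRel_eq_side D h.symm] at h2
      exact side_not_mem_other D h this hu
    · exact Set.mem_biUnion hrel hxu

/-- Every vertex is in the bag of `t` or in some component bag. -/
lemma compBags_cover {t : T} (x : V) :
    x ∈ D.bag t ∨ x ∈ ⋃ s ∈ (D.tree.neighborSet t : Set T), D.compBags {t} s := by
  obtain ⟨u, hu⟩ := D.cover x
  by_cases hut : u = t
  · exact Or.inl (hut ▸ hu)
  · obtain ⟨s, hs, hrel⟩ := exists_comp D hut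
    right
    simp only [Set.mem_iUnion]
    exact ⟨s, hs, Set.mem_biUnion hrel hu⟩

lemma compBags_eq_sideBags {t s : T} (h : D.tree.Adj t s) :
    D.compBags {t} s = D.sideBags s t := by
  unfold TreeCutDecomp.compBags TreeCutDecomp.sideBags
  rw [compRel_eq_side D h]

end NiceAux

namespace NiceAux

open TreeCutDecomp

variable {V E T : Type} {G : Multigraph V E} (D : TreeCutDecomp G T)

lemma card_le_cover₂ {α : Type} [Fintype α] {S₁ S₂ : Set α}
    (h : ∀ e, e ∈ S₁ ∨ e ∈ S₂) : Nat.card α ≤ S₁.ncard + S₂.ncard := by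
  have h1 : (Set.univ : Set α) ⊆ S₁ ∪ S₂ := fun e _ => h e
  calc Nat.card α = (Set.univ : Set α).ncard := (Set.ncard_univ α).symm
    _ ≤ (S₁ ∪ S₂).ncard := Set.ncard_le_ncard h1 (Set.toFinite _)
    _ ≤ S₁.ncard + S₂.ncard := Set.ncard_union_le _ _

lemma card_le_cover₃ {α : Type} [Fintype α] {S₁ S₂ S₃ : Set α}
    (h : ∀ e, e ∈ S₁ ∨ e ∈ S₂ ∨ e ∈ S₃) :
    Nat.card α ≤ S₁.ncard + (S₂.ncard + S₃.ncard) := by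
  have := card_le_cover₂ (S₁ := S₁) (S₂ := S₂ ∪ S₃) (by
    intro e; rcases h e with h | h | h
    · exact Or.inl h
    · exact Or.inr (Or.inl h)
    · exact Or.inr (Or.inr h))
  exact le_trans this (by
    have := Set.ncard_union_le S₂ S₃
    omega)

lemma card_le_cover₅ {α : Type} [Fintype α] {S₁ S₂ S₃ S₄ S₅ : Set α}
    (h : ∀ e, e ∈ S₁ ∨ e ∈ S₂ ∨ e ∈ S₃ ∨ e ∈ S₄ ∨ e ∈ S₅) :
    Nat.card α ≤ S₁.ncard + (S₂.ncard + (S₃.ncard + (S₄.ncard + S₅.ncard))) := by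
  have h1 := card_le_cover₃ (S₁ := S₁) (S₂ := S₂) (S₃ := S₃ ∪ (S₄ ∪ S₅)) (by
    intro e; rcases h e with h | h | h | h | h
    · exact Or.inl h
    · exact Or.inr (Or.inl h)
    · exact Or.inr (Or.inr (Or.inl h))
    · exact Or.inr (Or.inr (Or.inr (Or.inl h)))
    · exact Or.inr (Or.inr (Or.inr (Or.inr h))))
  have h2 := Set.ncard_union_le S₃ (S₄ ∪ S₅)
  have h3 := Set.ncard_union_le S₄ S₅
  omega

/-- Incident-to-union distributes. -/
lemma incident_biUnion {U : Set T} {f : T → Set V} :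
    {e : E | G.incident (⋃ s ∈ U, f s) e} = ⋃ s ∈ U, {e : E | G.incident (f s) e} := by
  ext e
  simp only [Set.mem_setOf_eq, Set.mem_iUnion, Multigraph.incident]
  constructor
  · rintro ⟨x, hx, hmem⟩
    obtain ⟨s, hs, hxs⟩ := hmem
    exact ⟨s, hs, x, hx, hxs⟩
  · rintro ⟨s, hs, x, hx, hxs⟩
    exact ⟨x, hx, s, hs, hxs⟩

/-- The sink lemma: if no tree edge is balanced, some node has only light
components around it. -/
lemma exists_sink [Fintype T] (m : ℕ)
    (hnb : ∀ a b : T, D.tree.Adj a b →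
      ¬(m ≤ 3 * {e : E | G.incident (D.sideBags a b) e}.ncard ∧
        m ≤ 3 * {e : E | G.incident (D.sideBags b a) e}.ncard)) :
    ∃ t : T, ∀ s, D.tree.Adj t s →
      3 * {e : E | G.incident (D.sideBags s t) e}.ncard < m := by
  classical
  let inc : Set V → ℕ := fun X => {e : E | G.incident X e}.ncard
  have hinc : ∀ X, inc X = {e : E | G.incident X e}.ncard := fun _ => rfl
  by_cases hadj : ∃ a b : T, D.tree.Adj a b
  · obtain ⟨a₀, b₀, hab₀⟩ := hadj
    set P : Finset (T × T) :=
      Finset.univ.filter (fun p => D.tree.Adj p.1 p.2 ∧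
        3 * inc (D.sideBags p.1 p.2) < m) with hP
    have hPne : P.Nonempty := by
      rcases (not_and_or.mp (hnb a₀ b₀ hab₀)) with h | h
      · refine ⟨(a₀, b₀), ?_⟩
        simp only [hP, Finset.mem_filter, Finset.mem_univ, true_and]
        rw [hinc]
        exact ⟨hab₀, by omega⟩
      · refine ⟨(b₀, a₀), ?_⟩
        simp only [hP, Finset.mem_filter, Finset.mem_univ, true_and]
        rw [hinc]
        exact ⟨hab₀.symm, by omega⟩
    obtain ⟨p, hpP, hpmax⟩ := P.exists_max_image (fun p => (D.side p.1 p.2).ncard) hPne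
    obtain ⟨a, b⟩ := p
    simp only [hP, Finset.mem_filter, Finset.mem_univ, true_and] at hpP
    refine ⟨b, ?_⟩
    intro s hbs
    by_contra hcon
    push_neg at hcon
    have hsa : s ≠ a := by
      rintro rfl
      rw [hinc] at hpP
      omega
    have hlight : 3 * inc (D.sideBags b s) < m := by
      rw [hinc]
      rcases (not_and_or.mp (hnb b s hbs)) with h | h
      · omega
      · omega
    have hmemP : (b, s) ∈ P := by
      simp only [hP, Finset.mem_filter, Finset.mem_univ, true_and]
      exact ⟨hbs, hlight⟩
    have hmax := hpmax (b, s) hmemP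
    have hss : D.side a b ⊂ D.side b s := by
      constructor
      · exact side_mono D hbs.symm hpP.1.symm (Ne.symm hsa)
      · intro hsub
        have h1 : b ∈ D.side b s := side_refl D b s
        have h2 : b ∉ D.side a b := not_mem_side D hpP.1
        exact h2 (hsub h1)
    have := Set.ncard_lt_ncard hss (Set.toFinite _)
    simp only at hmax
    omega
  · push_neg at hadj
    have : Nonempty T := D.isTree.isConnected.nonempty
    obtain ⟨t⟩ := this
    exact ⟨t, fun s hs => absurd hs (hadj t s)⟩

/-- Greedy partition of a light family. -/
lemma greedy {m : ℕ} [Fintype E] [DecidableEq T] (hm : 1 ≤ m) (N : Finset T) (F : T → Set E)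
    (hsmall : ∀ s ∈ N, 9 * (F s).ncard + 3 ≤ 3 * m)
    (hbig : 8 * m + 1 ≤ 9 * (⋃ s ∈ (N : Set T), F s).ncard) :
    ∃ U : Finset T, U ⊆ N ∧ 2 * m ≤ 9 * (⋃ s ∈ (U : Set T), F s).ncard ∧
      2 * m ≤ 9 * (⋃ s ∈ ((N \ U : Finset T) : Set T), F s).ncard := by
  classical
  set PP : Finset (Finset T) :=
    N.powerset.filter (fun U => 2 * m ≤ 9 * (⋃ s ∈ (U : Set T), F s).ncard) with hPP
  have hne : PP.Nonempty := ⟨N, by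
    simp only [hPP, Finset.mem_filter, Finset.mem_powerset]
    exact ⟨subset_rfl, by omega⟩⟩
  obtain ⟨U, hUPP, hUmin⟩ := PP.exists_min_image Finset.card hne
  simp only [hPP, Finset.mem_filter, Finset.mem_powerset] at hUPP
  obtain ⟨hUN, hU2⟩ := hUPP
  refine ⟨U, hUN, hU2, ?_⟩
  have hUne : U.Nonempty := by
    rcases Finset.eq_empty_or_nonempty U with rfl | h
    · simp only [Finset.coe_empty, Set.mem_empty_iff_false, Set.iUnion_of_empty,
        Set.iUnion_empty, Set.ncard_empty, mul_zero] at hU2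
      omega
    · exact h
  obtain ⟨s₀, hs₀⟩ := hUne
  have hU'small : 9 * (⋃ s ∈ ((U.erase s₀ : Finset T) : Set T), F s).ncard + 1 ≤ 2 * m := by
    by_contra hcon
    push_neg at hcon
    have hmem : U.erase s₀ ∈ PP := by
      simp only [hPP, Finset.mem_filter, Finset.mem_powerset]
      exact ⟨le_trans (Finset.erase_subset _ _) hUN, by omega⟩
    have := hUmin _ hmem
    have hlt := Finset.card_erase_lt_of_mem hs₀
    omega
  -- split bound for U
  have hsplit : (⋃ s ∈ (U : Set T), F s) ⊆
      (⋃ s ∈ ((U.erase s₀ : Finset T) : Set T), F s) ∪ F s₀ := by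
    intro e he
    simp only [Set.mem_iUnion, Finset.mem_coe] at he
    obtain ⟨s, hs, hes⟩ := he
    by_cases hss : s = s₀
    · exact Or.inr (hss ▸ hes)
    · exact Or.inl (by
        simp only [Set.mem_iUnion, Finset.mem_coe]
        exact ⟨s, Finset.mem_erase.mpr ⟨hss, hs⟩, hes⟩)
  have hUbound : 9 * (⋃ s ∈ (U : Set T), F s).ncard ≤ 5 * m - 4 := by
    have h1 : (⋃ s ∈ (U : Set T), F s).ncard ≤
        (⋃ s ∈ ((U.erase s₀ : Finset T) : Set T), F s).ncard + (F s₀).ncard := by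
      calc (⋃ s ∈ (U : Set T), F s).ncard
          ≤ ((⋃ s ∈ ((U.erase s₀ : Finset T) : Set T), F s) ∪ F s₀).ncard :=
            Set.ncard_le_ncard hsplit (Set.toFinite _)
        _ ≤ _ := Set.ncard_union_le _ _
    have h2 := hsmall s₀ (hUN hs₀)
    omega
  -- the rest
  have hrest : (⋃ s ∈ (N : Set T), F s) ⊆
      (⋃ s ∈ (U : Set T), F s) ∪ (⋃ s ∈ ((N \ U : Finset T) : Set T), F s) := by
    intro e he
    simp only [Set.mem_iUnion, Finset.mem_coe] at he
    obtain ⟨s, hs, hes⟩ := he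
    by_cases hsU : s ∈ U
    · exact Or.inl (by
        simp only [Set.mem_iUnion, Finset.mem_coe]; exact ⟨s, hsU, hes⟩)
    · exact Or.inr (by
        simp only [Set.mem_iUnion, Finset.mem_coe]
        exact ⟨s, Finset.mem_sdiff.mpr ⟨hs, hsU⟩, hes⟩)
  have h3 : (⋃ s ∈ (N : Set T), F s).ncard ≤
      (⋃ s ∈ (U : Set T), F s).ncard + (⋃ s ∈ ((N \ U : Finset T) : Set T), F s).ncard := by
    calc (⋃ s ∈ (N : Set T), F s).ncard
        ≤ ((⋃ s ∈ (U : Set T), F s) ∪ (⋃ s ∈ ((N \ U : Finset T) : Set T), F s)).ncard :=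
          Set.ncard_le_ncard hrest (Set.toFinite _)
      _ ≤ _ := Set.ncard_union_le _ _
  omega

end NiceAux

namespace NiceAux

open TreeCutDecomp

variable {V E : Type} (G : Multigraph V E)

lemma bot_isTree {α : Type} [Subsingleton α] [Nonempty α] : (⊥ : SimpleGraph α).IsTree := by
  constructor
  · constructor
    intro u v
    rw [Subsingleton.elim u v]
  · exact SimpleGraph.isAcyclic_bot

lemma neighborSet_bot {α : Type} (t : α) : (⊥ : SimpleGraph α).neighborSet t = ∅ := by
  ext x
  simp [SimpleGraph.mem_neighborSet]

/-- Single-node decomposition: any induced subgraph on at most `ξ` vertices is nice. -/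
lemma isNiceGraph_single [Fintype V] {ξ : ℕ} {A : Set V} (hA : A.ncard ≤ ξ) :
    IsNiceGraph ξ (G.induce A) := by
  classical
  let D' : TreeCutDecomp (G.induce A) PUnit :=
    { tree := ⊥, isTree := bot_isTree, finite := inferInstance,
      bag := fun _ => Set.univ,
      disjoint_bags := fun s t hst => absurd (Subsingleton.elim s t) hst,
      cover := fun v => ⟨PUnit.unit, trivial⟩ }
  refine ⟨PUnit, D', ?_, ?_⟩
  · intro a b hab
    exact absurd (show (⊥ : SimpleGraph PUnit).Adj a b from hab) (by simp)
  · intro t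
    refine ⟨∅, by simp, fun s hs => absurd hs (Set.notMem_empty s), ?_⟩
    show (Set.univ : Set {v : V // v ∈ A}).ncard +
      ((⊥ : SimpleGraph PUnit).neighborSet t \ ∅).ncard ≤ ξ
    rw [Set.diff_empty, neighborSet_bot, Set.ncard_empty, Set.ncard_univ]
    rw [Nat.card_coe_set_eq A]
    omega

lemma pathGraph_isAcyclic (n : ℕ) : (SimpleGraph.pathGraph n).IsAcyclic := by
  rw [SimpleGraph.isAcyclic_iff_forall_adj_isBridge]
  have aux : ∀ v w : Fin n, (v : ℕ) + 1 = (w : ℕ) →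
      ¬(SimpleGraph.pathGraph n \ SimpleGraph.fromEdgeSet {s(v, w)}).Reachable v w := by
    intro v w hvw hreach
    have hrtg := (SimpleGraph.reachable_iff_reflTransGen _ _).mp hreach
    have key : ∀ x : Fin n,
        Relation.ReflTransGen (SimpleGraph.pathGraph n \
          SimpleGraph.fromEdgeSet {s(v, w)}).Adj v x → (x : ℕ) ≤ (v : ℕ) := by
      intro x hx
      induction hx with
      | refl => exact le_refl _
      | tail hxy hadj ih =>
        rename_i p q
        obtain ⟨hpq, hnot⟩ := hadj
        rw [SimpleGraph.pathGraph_adj] at hpq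
        rcases hpq with h1 | h1
        · -- p + 1 = q
          by_cases hpv : (p : ℕ) = (v : ℕ)
          · exfalso
            apply hnot
            rw [SimpleGraph.fromEdgeSet_adj]
            have hp : p = v := Fin.ext hpv
            have hq : q = w := Fin.ext (by omega)
            refine ⟨by rw [hp, hq]; simp, ?_⟩
            rw [hp, hq]
            intro hvw'
            rw [hvw'] at hvw
            omega
          · omega
        · omega
    have := key w hrtg
    omega
  intro v w hadj
  have hadj' := hadj
  rw [SimpleGraph.pathGraph_adj] at hadj'
  rw [SimpleGraph.isBridge_iff]
  rcases hadj' with h1 | h1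
  · exact aux v w h1
  · intro hreach
    apply aux w v h1
    rw [Sym2.eq_swap]
    exact hreach.symm

/-- Path-of-singletons decomposition: if the induced subgraph has at most `ξ`
edges in total and `ξ ≥ 3`, it is nice. -/
lemma isNiceGraph_path [Fintype V] [Fintype E] {ξ : ℕ} {A : Set V} (h3 : 3 ≤ ξ)
    (hE : {e : E | ∀ x ∈ G.ends e, x ∈ A}.ncard ≤ ξ) :
    IsNiceGraph ξ (G.induce A) := by
  classical
  by_cases hn : Fintype.card {v : V // v ∈ A} = 0
  · refine isNiceGraph_single G ?_
    have : A.ncard = Nat.card {v : V // v ∈ A} := (Nat.card_coe_set_eq A).symm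
    rw [this, Nat.card_eq_fintype_card, hn]
    omega
  · obtain ⟨k, hk⟩ := Nat.exists_eq_succ_of_ne_zero hn
    have eqv : {v : V // v ∈ A} ≃ Fin (k + 1) :=
      (Fintype.equivFin {v : V // v ∈ A}).trans (finCongr hk)
    have htree : (SimpleGraph.pathGraph (k + 1)).IsTree :=
      ⟨SimpleGraph.pathGraph_connected k, pathGraph_isAcyclic (k + 1)⟩
    let D' : TreeCutDecomp (G.induce A) (Fin (k + 1)) :=
      { tree := SimpleGraph.pathGraph (k + 1), isTree := htree, finite := inferInstance,
        bag := fun i => eqv ⁻¹' {i},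
        disjoint_bags := by
          intro s t hst
          rw [Set.disjoint_left]
          intro x hx hx'
          simp only [Set.mem_preimage, Set.mem_singleton_iff] at hx hx'
          exact hst (hx.symm.trans hx')
        cover := fun v => ⟨eqv v, rfl⟩ }
    refine ⟨Fin (k + 1), D', ?_, ?_⟩
    · intro a b hab
      have hsub : (D'.adhEdges a b) ⊆ Set.univ := Set.subset_univ _
      calc (D'.adhEdges a b).ncard ≤ (Set.univ : Set _).ncard :=
            Set.ncard_le_ncard hsub (Set.toFinite _)
        _ = Nat.card {e : E // ∀ x ∈ G.ends e, x ∈ A} := Set.ncard_univ _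
        _ = {e : E | ∀ x ∈ G.ends e, x ∈ A}.ncard := Nat.card_coe_set_eq _
        _ ≤ ξ := hE
    · intro t
      refine ⟨∅, by simp, fun s hs => absurd hs (Set.notMem_empty s), ?_⟩
      have hbag : (D'.bag t).ncard = 1 := by
        show ((eqv ⁻¹' {t}) : Set {v : V // v ∈ A}).ncard = 1
        have : (eqv ⁻¹' {t} : Set {v : V // v ∈ A}) = {eqv.symm t} := by
          ext x
          simp [Equiv.eq_symm_apply, eq_comm]
        rw [this, Set.ncard_singleton]
      have hnbr : (D'.tree.neighborSet t).ncard ≤ 2 := by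
        show ((SimpleGraph.pathGraph (k + 1)).neighborSet t).ncard ≤ 2
        have hsub : (SimpleGraph.pathGraph (k + 1)).neighborSet t ⊆
            {x : Fin (k + 1) | (x : ℕ) + 1 = (t : ℕ)} ∪
              {x : Fin (k + 1) | (x : ℕ) = (t : ℕ) + 1} := by
          intro u hu
          rw [SimpleGraph.mem_neighborSet, SimpleGraph.pathGraph_adj] at hu
          rcases hu with h | h
          · exact Or.inr h.symm
          · exact Or.inl h
        have h1 : ({x : Fin (k + 1) | (x : ℕ) + 1 = (t : ℕ)}).ncard ≤ 1 := by
          rw [Set.ncard_le_one (Set.toFinite _)]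
          intro a ha b hb
          simp only [Set.mem_setOf_eq] at ha hb
          exact Fin.ext (by omega)
        have h2 : ({x : Fin (k + 1) | (x : ℕ) = (t : ℕ) + 1}).ncard ≤ 1 := by
          rw [Set.ncard_le_one (Set.toFinite _)]
          intro a ha b hb
          simp only [Set.mem_setOf_eq] at ha hb
          exact Fin.ext (by omega)
        calc _ ≤ ({x : Fin (k + 1) | (x : ℕ) + 1 = (t : ℕ)} ∪
              {x : Fin (k + 1) | (x : ℕ) = (t : ℕ) + 1}).ncard :=
              Set.ncard_le_ncard hsub (Set.toFinite _)
          _ ≤ _ := Set.ncard_union_le _ _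
          _ ≤ 2 := by omega
      have hdiff : (D'.tree.neighborSet t \ ∅).ncard ≤ 2 := by
        rw [Set.diff_empty]; exact hnbr
      omega

end NiceAux

namespace NiceAux

open TreeCutDecomp

variable {V E T : Type} {G : Multigraph V E}

lemma ncard_biUnion_le {α β : Type} [Fintype β] (U : Finset α) (f : α → Set β) :
    (⋃ v ∈ (U : Set α), f v).ncard ≤ ∑ v ∈ U, (f v).ncard := by
  classical
  induction U using Finset.induction with
  | empty => simp
  | insert a s hnotmem ih =>
    have : (⋃ v ∈ ((insert a s : Finset α) : Set α), f v) =
        f a ∪ ⋃ v ∈ (s : Set α), f v := by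
      ext x
      simp only [Set.mem_iUnion, Set.mem_union, Finset.coe_insert, Set.mem_insert_iff,
        Finset.mem_coe]
      constructor
      · rintro ⟨v, (rfl | hv), hx⟩
        · exact Or.inl hx
        · exact Or.inr ⟨v, hv, hx⟩
      · rintro (hx | ⟨v, hv, hx⟩)
        · exact ⟨a, Or.inl rfl, hx⟩
        · exact ⟨v, Or.inr hv, hx⟩
    rw [this, Finset.sum_insert hnotmem]
    calc (f a ∪ ⋃ v ∈ (s : Set α), f v).ncard
        ≤ (f a).ncard + (⋃ v ∈ (s : Set α), f v).ncard := Set.ncard_union_le _ _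
      _ ≤ _ := by omega

/-- The small-`ξ` conspiracy: if no edge at all is incident with
`sideBags t₂ t₁ \ bag t₂` and `ξ ≤ 2`, then the whole side has at most `ξ`
vertices. -/
lemma ncard_sideBags_le [Fintype V] [Fintype E] {ξ : ℕ} (hξ2 : ξ ≤ 2)
    (D : TreeCutDecomp G T) (hD : D.IsNice ξ) {t₁ t₂ : T} (h : D.tree.Adj t₁ t₂)
    (hinc : {e : E | G.incident (D.sideBags t₂ t₁ \ D.bag t₂) e} = ∅) :
    (D.sideBags t₂ t₁).ncard ≤ ξ := by
  classical
  haveI : Finite T := D.finite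
  haveI : Fintype T := Fintype.ofFinite T
  set Γ := D.tree with hΓ
  set A := D.sideBags t₂ t₁ with hA
  -- the non-root nodes of the side
  set U : Finset T := Set.toFinset (D.side t₂ t₁ \ {t₂}) with hU
  have hUmem : ∀ v, v ∈ U ↔ v ∈ D.side t₂ t₁ ∧ v ≠ t₂ := by
    intro v
    simp [hU]
  -- bags of non-root nodes avoid the root bag
  have hbagsub : ∀ v ∈ U, D.bag v ⊆ A \ D.bag t₂ := by
    intro v hv x hx
    rw [hUmem] at hv
    refine ⟨bag_subset_sideBags D hv.1 hx, ?_⟩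
    intro hx2
    exact (D.disjoint_bags v t₂ hv.2).le_bot ⟨hx, hx2⟩
  -- budgets of non-root nodes
  have hbud : ∀ v ∈ U, (D.bag v).ncard + (Γ.neighborSet v).ncard ≤ ξ := by
    intro v hv
    obtain ⟨S, hSsub, hS1, hSbud⟩ := hD.2 v
    have hSempty : S = ∅ := by
      by_contra hne
      obtain ⟨s', hs'⟩ := Set.nonempty_iff_ne_empty.mpr hne
      obtain ⟨hcard, hincid⟩ := hS1 s' hs'
      have hnonempty : (D.adhEdges v s').Nonempty := by
        rw [← Set.ncard_pos (Set.toFinite _)] at *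
        omega
      obtain ⟨f, hf⟩ := hnonempty
      have hfi := hincid f hf
      obtain ⟨x, hx, hxbag⟩ := hfi
      have : f ∈ {e : E | G.incident (A \ D.bag t₂) e} :=
        ⟨x, hx, hbagsub v hv hxbag⟩
      rw [hinc] at this
      exact this
    rw [hSempty, Set.diff_empty] at hSbud
    exact hSbud
  -- parent function towards t₂
  have hpar : ∀ v : T, v ≠ t₂ → ∃ w, Γ.Adj v w ∧ Γ.dist w t₂ < Γ.dist v t₂ := by
    intro v hv
    have hconn := D.isTree.isConnected
    have hreach : Γ.Reachable v t₂ := hconn v t₂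
    obtain ⟨p, hp⟩ := hreach.exists_walk_length_eq_dist
    cases p with
    | nil => exact absurd rfl hv
    | cons hadj q =>
      rename_i u
      refine ⟨u, hadj, ?_⟩
      have h1 : Γ.dist u t₂ ≤ q.length := SimpleGraph.dist_le q
      have h2 : 0 < Γ.dist v t₂ := hconn.pos_dist_of_ne hv
      rw [SimpleGraph.Walk.length_cons] at hp
      omega
  set par : T → T := fun v => if hv : v ≠ t₂ then (hpar v hv).choose else t₂ with hpardef
  have hparspec : ∀ v, v ≠ t₂ → Γ.Adj v (par v) ∧ Γ.dist (par v) t₂ < Γ.dist v t₂ := by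
    intro v hv
    simp only [hpardef, dif_pos hv]
    exact (hpar v hv).choose_spec
  have hparU : ∀ v ∈ U, par v ∈ D.side t₂ t₁ := by
    intro v hv
    rw [hUmem] at hv
    by_contra hnot
    have := side_boundary D h hv.1 (hparspec v hv.2).1 hnot
    exact hv.2 this.1
  -- the boundary count
  set K : Finset T := U.filter (fun v => par v = t₂) with hK
  have hKk : ∀ v ∈ K, Γ.Adj t₂ v := by
    intro v hv
    simp only [hK, Finset.mem_filter] at hv
    have := (hparspec v ((hUmem v).mp hv.1).2).1
    rw [hv.2] at this
    exact this.symm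
  -- counting: sum of degrees over U
  set U₂ : Finset T := U.filter (fun v => par v ∈ U) with hU₂
  have hU₂card : U.card ≤ U₂.card + K.card := by
    have : U = U₂ ∪ K := by
      ext v
      simp only [hU₂, hK, Finset.mem_union, Finset.mem_filter]
      constructor
      · intro hv
        by_cases hpv : par v ∈ U
        · exact Or.inl ⟨hv, hpv⟩
        · refine Or.inr ⟨hv, ?_⟩
          by_contra hne
          have hside := hparU v hv
          exact hpv ((hUmem _).mpr ⟨hside, hne⟩)
      · rintro (hv | hv) <;> exact hv.1
    calc U.card = (U₂ ∪ K).card := by rw [← this]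
      _ ≤ U₂.card + K.card := Finset.card_union_le _ _
  -- fibers of par partition U₂
  have hfiber : U₂.card = ∑ v ∈ U, (U₂.filter (fun u => par u = v)).card := by
    refine Finset.card_eq_sum_card_fiberwise ?_
    intro u hu
    simp only [hU₂, Finset.mem_coe, Finset.mem_filter] at hu
    exact hu.2
  -- degree lower bound
  have hdeg : ∀ v ∈ U, 1 + (U₂.filter (fun u => par u = v)).card ≤
      (Γ.neighborSet v).ncard := by
    intro v hv
    have hvt₂ : v ≠ t₂ := ((hUmem v).mp hv).2
    set Ch : Finset T := U₂.filter (fun u => par u = v) with hCh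
    have hchsub : ∀ u ∈ Ch, Γ.Adj v u := by
      intro u hu
      simp only [hCh, hU₂, Finset.mem_filter] at hu
      have := (hparspec u ((hUmem u).mp hu.1.1).2).1
      rw [hu.2] at this
      exact this.symm
    have hparnot : par v ∉ Ch := by
      intro hmem
      simp only [hCh, hU₂, Finset.mem_filter] at hmem
      have h1 := (hparspec v hvt₂).2
      have h2 := (hparspec (par v) ((hUmem _).mp hmem.1.1).2).2
      rw [hmem.2] at h2
      omega
    have hsub : (insert (par v) Ch : Finset T) ⊆ (Γ.neighborSet v).toFinite.toFinset := by
      intro u hu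
      rw [Finset.mem_insert] at hu
      rw [Set.Finite.mem_toFinset]
      rcases hu with rfl | hu
      · exact (hparspec v hvt₂).1
      · exact hchsub u hu
    have hcard := Finset.card_le_card hsub
    rw [Finset.card_insert_of_notMem hparnot] at hcard
    rw [Set.ncard_eq_toFinset_card _ (Set.toFinite _)]
    omega
  -- sum the budgets
  have hsum : ∑ v ∈ U, ((D.bag v).ncard + (Γ.neighborSet v).ncard) ≤ ξ * U.card := by
    calc ∑ v ∈ U, ((D.bag v).ncard + (Γ.neighborSet v).ncard)
        ≤ ∑ _v ∈ U, ξ := Finset.sum_le_sum hbud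
      _ = ξ * U.card := by rw [Finset.sum_const, smul_eq_mul, mul_comm]
  have hdegsum : U.card + U₂.card ≤ ∑ v ∈ U, (Γ.neighborSet v).ncard := by
    calc U.card + U₂.card = ∑ v ∈ U, 1 + ∑ v ∈ U, (U₂.filter (fun u => par u = v)).card := by
          rw [← hfiber, Finset.sum_const, smul_eq_mul, mul_one]
      _ = ∑ v ∈ U, (1 + (U₂.filter (fun u => par u = v)).card) := by
          rw [Finset.sum_add_distrib]
      _ ≤ _ := Finset.sum_le_sum hdeg
  have hbags : (A \ D.bag t₂).ncard ≤ ∑ v ∈ U, (D.bag v).ncard := by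
    have hsub : A \ D.bag t₂ ⊆ ⋃ v ∈ (U : Set T), D.bag v := by
      rintro x ⟨hxA, hxbag⟩
      rw [hA, mem_sideBags] at hxA
      obtain ⟨u, hu, hxu⟩ := hxA
      have hut : u ≠ t₂ := by
        intro hh
        rw [hh] at hxu
        exact hxbag hxu
      exact Set.mem_biUnion (by rw [Finset.mem_coe, hUmem]; exact ⟨hu, hut⟩) hxu
    calc (A \ D.bag t₂).ncard ≤ (⋃ v ∈ (U : Set T), D.bag v).ncard :=
          Set.ncard_le_ncard hsub (Set.toFinite _)
      _ ≤ _ := ncard_biUnion_le U _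
  -- the root budget
  have hroot : (D.bag t₂).ncard + K.card ≤ ξ := by
    obtain ⟨S, hSsub, hS1, hSbud⟩ := hD.2 t₂
    have hSsub' : S ⊆ {t₁} := by
      intro s' hs'
      by_contra hne
      have hs'adj : Γ.Adj t₂ s' := hSsub hs'
      have hs'side : s' ∈ D.side t₂ t₁ := mem_side_of_adj D hs'adj hne
      obtain ⟨hcard, hincid⟩ := hS1 s' hs'
      have hnonempty : (D.adhEdges t₂ s').Nonempty := by
        rw [← Set.ncard_pos (Set.toFinite _)]
        omega
      obtain ⟨f, hf⟩ := hnonempty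
      -- f is incident with the bags of side s' t₂ ⊆ A \ bag t₂
      have hcross : G.incident (D.sideBags s' t₂) f := hf.2
      obtain ⟨x, hx, hxmem⟩ := hcross
      rw [mem_sideBags] at hxmem
      obtain ⟨u, hu, hxu⟩ := hxmem
      have huside : u ∈ D.side t₂ t₁ := side_mono D h hs'adj hne hu
      have hut₂ : u ≠ t₂ := fun hh => not_mem_side D hs'adj.symm (hh ▸ hu)
      have : f ∈ {e : E | G.incident (A \ D.bag t₂) e} := by
        refine ⟨x, hx, bag_subset_sideBags D huside hxu, ?_⟩
        intro hx2
        exact (D.disjoint_bags u t₂ hut₂).le_bot ⟨hxu, hx2⟩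
      rw [hinc] at this
      exact this
    have hKsub : (K : Set T) ⊆ D.tree.neighborSet t₂ \ S := by
      intro v hv
      rw [Finset.mem_coe] at hv
      refine ⟨hKk v hv, ?_⟩
      · intro hvS
        have := hSsub' hvS
        rw [Set.mem_singleton_iff] at this
        have hvU := (Finset.mem_filter.mp hv).1
        have hvside := ((hUmem v).mp hvU).1
        rw [this] at hvside
        exact side_not_mem_other D h (side_refl D t₁ t₂) hvside
    have hKcard : K.card ≤ (D.tree.neighborSet t₂ \ S).ncard := by
      have := Set.ncard_le_ncard hKsub (Set.toFinite _)
      rwa [Set.ncard_coe_finset] at this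
    omega
  -- assemble
  have hXA : D.bag t₂ ⊆ A := bag_subset_sideBags D (side_refl D t₂ t₁)
  have hAsplit : A.ncard ≤ (D.bag t₂).ncard + (A \ D.bag t₂).ncard := by
    have : A = D.bag t₂ ∪ (A \ D.bag t₂) := by
      rw [Set.union_diff_cancel hXA]
    calc A.ncard = (D.bag t₂ ∪ (A \ D.bag t₂)).ncard := by rw [← this]
      _ ≤ _ := Set.ncard_union_le _ _
  have hsum2 : ∑ v ∈ U, (D.bag v).ncard + (U.card + U₂.card) ≤ ξ * U.card := by
    have := Finset.sum_add_distrib (s := U) (f := fun v => (D.bag v).ncard)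
      (g := fun v => (Γ.neighborSet v).ncard)
    omega
  have hmul : ξ * U.card ≤ 2 * U.card := Nat.mul_le_mul_right _ hξ2
  omega

end NiceAux

open NiceAux in
/-- Let `ξ` be a positive integer and `(T,𝒳)` a `ξ`-nice
tree-cut decomposition of a graph `G`. Then either (1) there exists an edge
`t₁t₂` of `T` such that for each `i ∈ {1,2}`, at least `|E(G)|/3` edges of `G`
are incident with `A_{e,t_i}` and `G[A_{e,t_i}]` is a `ξ`-nice graph with at
least `|E(G)|/3 − ξ` edges, or (2) there exists a node `t*` of `T` such that
either `G[X_{t*}]` has at least `|E(G)|/9` edges, or the components of `T − t*`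
can be partitioned into two classes `U₁, U₂` such that for each `i`, at least
`2|E(G)|/9` edges of `G` are incident with the union of the bags over the
components in `U_i`. -/
theorem nice_tree_cut_sep {V E : Type} [Fintype V] [Fintype E]
    (ξ : ℕ) (hξ : 0 < ξ) (G : Multigraph V E)
    {T : Type} (D : TreeCutDecomp G T) (hD : D.IsNice ξ) :
    (∃ t₁ t₂ : T, D.tree.Adj t₁ t₂ ∧
      (Nat.card E ≤ 3 * {e : E | G.incident (D.sideBags t₂ t₁) e}.ncard ∧
        IsNiceGraph ξ (G.induce (D.sideBags t₂ t₁)) ∧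
        Nat.card E ≤ 3 * ({e : E | ∀ x ∈ G.ends e, x ∈ D.sideBags t₂ t₁}.ncard + ξ)) ∧
      (Nat.card E ≤ 3 * {e : E | G.incident (D.sideBags t₁ t₂) e}.ncard ∧
        IsNiceGraph ξ (G.induce (D.sideBags t₁ t₂)) ∧
        Nat.card E ≤ 3 * ({e : E | ∀ x ∈ G.ends e, x ∈ D.sideBags t₁ t₂}.ncard + ξ))) ∨
    (∃ tstar : T,
      Nat.card E ≤ 9 * {e : E | ∀ x ∈ G.ends e, x ∈ D.bag tstar}.ncard ∨
      ∃ U₁ U₂ : Set T, U₁ ∪ U₂ = D.tree.neighborSet tstar ∧ Disjoint U₁ U₂ ∧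
        2 * Nat.card E ≤
          9 * {e : E | G.incident (⋃ s ∈ U₁, D.compBags {tstar} s) e}.ncard ∧
        2 * Nat.card E ≤
          9 * {e : E | G.incident (⋃ s ∈ U₂, D.compBags {tstar} s) e}.ncard) := by
  classical
  haveI : Finite T := D.finite
  haveI : Fintype T := Fintype.ofFinite T
  have hTne : Nonempty T := D.isTree.isConnected.nonempty
  set m : ℕ := Nat.card E with hm
  -- Case 1: a heavy bag
  by_cases hbag : ∃ t : T, m ≤ 9 * {e : E | ∀ x ∈ G.ends e, x ∈ D.bag t}.ncard
  · obtain ⟨t, ht⟩ := hbag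
    exact Or.inr ⟨t, Or.inl ht⟩
  push_neg at hbag
  have hm1 : 1 ≤ m := by
    obtain ⟨t₀⟩ := hTne
    have := hbag t₀
    omega
  -- Case 2: a balanced edge
  by_cases hbal : ∃ t₁ t₂ : T, D.tree.Adj t₁ t₂ ∧
      m ≤ 3 * {e : E | G.incident (D.sideBags t₂ t₁) e}.ncard ∧
      m ≤ 3 * {e : E | G.incident (D.sideBags t₁ t₂) e}.ncard
  · obtain ⟨t₁, t₂, hadj, hBA, hBB⟩ := hbal
    -- Sub-case: the A-side off-root mass is large
    by_cases hA2 : 2 * m ≤ 9 * {e : E | G.incident (D.sideBags t₂ t₁ \ D.bag t₂) e}.ncard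
    · refine Or.inr ⟨t₂, Or.inr ⟨{t₁}, D.tree.neighborSet t₂ \ {t₁}, ?_, ?_, ?_, ?_⟩⟩
      · exact Set.union_diff_cancel (by
          intro x hx
          rw [Set.mem_singleton_iff] at hx
          subst hx
          exact hadj.symm)
      · rw [Set.disjoint_left]
        intro a ha ha'
        exact ha'.2 ha
      · have hU : (⋃ s ∈ ({t₁} : Set T), D.compBags {t₂} s) = D.compBags {t₂} t₁ := by
          simp
        rw [hU, compBags_eq_sideBags D hadj.symm]
        omega
      · rw [biUnion_compBags_eq D hadj]
        exact hA2
    by_cases hB2 : 2 * m ≤ 9 * {e : E | G.incident (D.sideBags t₁ t₂ \ D.bag t₁) e}.ncard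
    · refine Or.inr ⟨t₁, Or.inr ⟨{t₂}, D.tree.neighborSet t₁ \ {t₂}, ?_, ?_, ?_, ?_⟩⟩
      · exact Set.union_diff_cancel (by
          intro x hx
          rw [Set.mem_singleton_iff] at hx
          subst hx
          exact hadj)
      · rw [Set.disjoint_left]
        intro a ha ha'
        exact ha'.2 ha
      · have hU : (⋃ s ∈ ({t₂} : Set T), D.compBags {t₁} s) = D.compBags {t₁} t₂ := by
          simp
        rw [hU, compBags_eq_sideBags D hadj]
        omega
      · rw [biUnion_compBags_eq D hadj.symm]
        exact hB2
    -- Case 5: concentration at the balanced edge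
    push_neg at hA2 hB2
    left
    refine ⟨t₁, t₂, hadj, ?_, ?_⟩
    -- arithmetic: m ≤ 3ξ - 2
    · have hcross : {e : E | G.incident (D.bag t₁) e ∧ G.incident (D.bag t₂) e}.ncard ≤ ξ := by
        have hsub : {e : E | G.incident (D.bag t₁) e ∧ G.incident (D.bag t₂) e} ⊆
            D.adhEdges t₁ t₂ := by
          rintro e ⟨h1, h2⟩
          refine ⟨?_, ?_⟩
          · obtain ⟨x, hx, hxb⟩ := h1
            exact ⟨x, hx, bag_subset_sideBags D (side_refl D t₁ t₂) hxb⟩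
          · obtain ⟨x, hx, hxb⟩ := h2
            exact ⟨x, hx, bag_subset_sideBags D (side_refl D t₂ t₁) hxb⟩
        exact le_trans (Set.ncard_le_ncard hsub (Set.toFinite _)) (hD.1 t₁ t₂ hadj)
      have hcover : ∀ e : E,
          e ∈ {e : E | G.incident (D.sideBags t₂ t₁ \ D.bag t₂) e} ∨
          e ∈ {e : E | G.incident (D.sideBags t₁ t₂ \ D.bag t₁) e} ∨
          e ∈ {e : E | ∀ x ∈ G.ends e, x ∈ D.bag t₁} ∨
          e ∈ {e : E | ∀ x ∈ G.ends e, x ∈ D.bag t₂} ∨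
          e ∈ {e : E | G.incident (D.bag t₁) e ∧ G.incident (D.bag t₂) e} := by
        intro e
        by_cases h1 : G.incident (D.sideBags t₂ t₁ \ D.bag t₂) e
        · exact Or.inl h1
        by_cases h2 : G.incident (D.sideBags t₁ t₂ \ D.bag t₁) e
        · exact Or.inr (Or.inl h2)
        -- every end is in bag t₁ or bag t₂
        have hends : ∀ x ∈ G.ends e, x ∈ D.bag t₁ ∨ x ∈ D.bag t₂ := by
          intro x hx
          have hcov : x ∈ D.sideBags t₂ t₁ ∪ D.sideBags t₁ t₂ := by
            rw [sideBags_union D hadj.symm]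
            trivial
          rcases hcov with hA | hB
          · right
            by_contra hnot
            exact h1 ⟨x, hx, hA, hnot⟩
          · left
            by_contra hnot
            exact h2 ⟨x, hx, hB, hnot⟩
        by_cases hx1 : G.incident (D.bag t₁) e
        · by_cases hx2 : G.incident (D.bag t₂) e
          · exact Or.inr (Or.inr (Or.inr (Or.inr ⟨hx1, hx2⟩)))
          · refine Or.inr (Or.inr (Or.inl ?_))
            intro x hx
            rcases hends x hx with h | h
            · exact h
            · exact absurd ⟨x, hx, h⟩ hx2
        · refine Or.inr (Or.inr (Or.inr (Or.inl ?_)))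
          intro x hx
          rcases hends x hx with h | h
          · exact absurd ⟨x, hx, h⟩ hx1
          · exact h
      have hcount := card_le_cover₅ hcover
      have hb1 := hbag t₁
      have hb2 := hbag t₂
      have hm3 : m + 2 ≤ 3 * ξ := by omega
      -- the A-side edge count is at most ξ - 1
      have hηA : {e : E | ∀ x ∈ G.ends e, x ∈ D.sideBags t₂ t₁}.ncard + 1 ≤ ξ := by
        have hcov2 : ∀ e ∈ {e : E | ∀ x ∈ G.ends e, x ∈ D.sideBags t₂ t₁},
            e ∈ {e : E | G.incident (D.sideBags t₂ t₁ \ D.bag t₂) e} ∪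
              {e : E | ∀ x ∈ G.ends e, x ∈ D.bag t₂} := by
          intro e he
          by_cases h1 : G.incident (D.sideBags t₂ t₁ \ D.bag t₂) e
          · exact Or.inl h1
          · right
            intro x hx
            by_contra hnot
            exact h1 ⟨x, hx, he x hx, hnot⟩
        have hsub := Set.ncard_le_ncard hcov2 (Set.toFinite _)
        have hun := Set.ncard_union_le {e : E | G.incident (D.sideBags t₂ t₁ \ D.bag t₂) e}
          {e : E | ∀ x ∈ G.ends e, x ∈ D.bag t₂}
        have hb2 := hbag t₂
        omega
      refine ⟨hBA, ?_, by omega⟩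
      -- niceness of the A-side
      by_cases hξ3 : 3 ≤ ξ
      · exact isNiceGraph_path G hξ3 (by omega)
      · have hξ2 : ξ ≤ 2 := by omega
        have hinc0 : {e : E | G.incident (D.sideBags t₂ t₁ \ D.bag t₂) e} = ∅ := by
          have : {e : E | G.incident (D.sideBags t₂ t₁ \ D.bag t₂) e}.ncard = 0 := by omega
          rwa [Set.ncard_eq_zero (Set.toFinite _)] at this
        exact isNiceGraph_single G (ncard_sideBags_le hξ2 D hD hadj hinc0)
    -- the B-side: symmetric
    · have hcross : {e : E | G.incident (D.bag t₂) e ∧ G.incident (D.bag t₁) e}.ncard ≤ ξ := by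
        have hsub : {e : E | G.incident (D.bag t₂) e ∧ G.incident (D.bag t₁) e} ⊆
            D.adhEdges t₂ t₁ := by
          rintro e ⟨h1, h2⟩
          refine ⟨?_, ?_⟩
          · obtain ⟨x, hx, hxb⟩ := h1
            exact ⟨x, hx, bag_subset_sideBags D (side_refl D t₂ t₁) hxb⟩
          · obtain ⟨x, hx, hxb⟩ := h2
            exact ⟨x, hx, bag_subset_sideBags D (side_refl D t₁ t₂) hxb⟩
        exact le_trans (Set.ncard_le_ncard hsub (Set.toFinite _)) (hD.1 t₂ t₁ hadj.symm)
      have hcover : ∀ e : E,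
          e ∈ {e : E | G.incident (D.sideBags t₁ t₂ \ D.bag t₁) e} ∨
          e ∈ {e : E | G.incident (D.sideBags t₂ t₁ \ D.bag t₂) e} ∨
          e ∈ {e : E | ∀ x ∈ G.ends e, x ∈ D.bag t₂} ∨
          e ∈ {e : E | ∀ x ∈ G.ends e, x ∈ D.bag t₁} ∨
          e ∈ {e : E | G.incident (D.bag t₂) e ∧ G.incident (D.bag t₁) e} := by
        intro e
        by_cases h1 : G.incident (D.sideBags t₁ t₂ \ D.bag t₁) e
        · exact Or.inl h1
        by_cases h2 : G.incident (D.sideBags t₂ t₁ \ D.bag t₂) e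
        · exact Or.inr (Or.inl h2)
        have hends : ∀ x ∈ G.ends e, x ∈ D.bag t₂ ∨ x ∈ D.bag t₁ := by
          intro x hx
          have hcov : x ∈ D.sideBags t₂ t₁ ∪ D.sideBags t₁ t₂ := by
            rw [sideBags_union D hadj.symm]
            trivial
          rcases hcov with hA | hB
          · left
            by_contra hnot
            exact h2 ⟨x, hx, hA, hnot⟩
          · right
            by_contra hnot
            exact h1 ⟨x, hx, hB, hnot⟩
        by_cases hx1 : G.incident (D.bag t₂) e
        · by_cases hx2 : G.incident (D.bag t₁) e
          · exact Or.inr (Or.inr (Or.inr (Or.inr ⟨hx1, hx2⟩)))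
          · refine Or.inr (Or.inr (Or.inl ?_))
            intro x hx
            rcases hends x hx with h | h
            · exact h
            · exact absurd ⟨x, hx, h⟩ hx2
        · refine Or.inr (Or.inr (Or.inr (Or.inl ?_)))
          intro x hx
          rcases hends x hx with h | h
          · exact absurd ⟨x, hx, h⟩ hx1
          · exact h
      have hcount := card_le_cover₅ hcover
      have hb1 := hbag t₁
      have hb2 := hbag t₂
      have hm3 : m + 2 ≤ 3 * ξ := by omega
      have hηB : {e : E | ∀ x ∈ G.ends e, x ∈ D.sideBags t₁ t₂}.ncard + 1 ≤ ξ := by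
        have hcov2 : ∀ e ∈ {e : E | ∀ x ∈ G.ends e, x ∈ D.sideBags t₁ t₂},
            e ∈ {e : E | G.incident (D.sideBags t₁ t₂ \ D.bag t₁) e} ∪
              {e : E | ∀ x ∈ G.ends e, x ∈ D.bag t₁} := by
          intro e he
          by_cases h1 : G.incident (D.sideBags t₁ t₂ \ D.bag t₁) e
          · exact Or.inl h1
          · right
            intro x hx
            by_contra hnot
            exact h1 ⟨x, hx, he x hx, hnot⟩
        have hsub := Set.ncard_le_ncard hcov2 (Set.toFinite _)
        have hun := Set.ncard_union_le {e : E | G.incident (D.sideBags t₁ t₂ \ D.bag t₁) e}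
          {e : E | ∀ x ∈ G.ends e, x ∈ D.bag t₁}
        have hb1 := hbag t₁
        omega
      refine ⟨hBB, ?_, by omega⟩
      by_cases hξ3 : 3 ≤ ξ
      · exact isNiceGraph_path G hξ3 (by omega)
      · have hξ2 : ξ ≤ 2 := by omega
        have hinc0 : {e : E | G.incident (D.sideBags t₁ t₂ \ D.bag t₁) e} = ∅ := by
          have : {e : E | G.incident (D.sideBags t₁ t₂ \ D.bag t₁) e}.ncard = 0 := by omega
          rwa [Set.ncard_eq_zero (Set.toFinite _)] at this
        exact isNiceGraph_single G (ncard_sideBags_le hξ2 D hD hadj.symm hinc0)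
  -- Case 3: no balanced edge, use the sink
  · push_neg at hbal
    have hnb : ∀ a b : T, D.tree.Adj a b →
        ¬(m ≤ 3 * {e : E | G.incident (D.sideBags a b) e}.ncard ∧
          m ≤ 3 * {e : E | G.incident (D.sideBags b a) e}.ncard) := by
      intro a b hab hcon
      exact absurd (hbal a b hab hcon.2) (by omega)
    obtain ⟨ts, hsink⟩ := exists_sink D m hnb
    refine Or.inr ⟨ts, Or.inr ?_⟩
    set N : Finset T := (D.tree.neighborSet ts).toFinite.toFinset with hN
    set F : T → Set E := fun s => {e : E | G.incident (D.compBags {ts} s) e} with hF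
    have hsmall : ∀ s ∈ N, 9 * (F s).ncard + 3 ≤ 3 * m := by
      intro s hs
      rw [hN, Set.Finite.mem_toFinset] at hs
      have hadj : D.tree.Adj ts s := hs
      have := hsink s hadj
      have hFs : F s = {e : E | G.incident (D.sideBags s ts) e} := by
        show {e : E | G.incident (D.compBags {ts} s) e} = _
        rw [compBags_eq_sideBags D hadj]
      rw [hFs]
      omega
    have hbig : 8 * m + 1 ≤ 9 * (⋃ s ∈ (N : Set T), F s).ncard := by
      have hcov : ∀ e : E, e ∈ {e : E | ∀ x ∈ G.ends e, x ∈ D.bag ts} ∨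
          e ∈ ⋃ s ∈ (N : Set T), F s := by
        intro e
        by_cases hmem : e ∈ ⋃ s ∈ (N : Set T), F s
        · exact Or.inr hmem
        · left
          intro x hx
          rcases compBags_cover D (t := ts) x with h | h
          · exact h
          · exfalso
            rw [Set.mem_iUnion₂] at h
            obtain ⟨s, hs, hxs⟩ := h
            apply hmem
            rw [Set.mem_iUnion₂]
            refine ⟨s, ?_, ⟨x, hx, hxs⟩⟩
            rw [Finset.mem_coe, hN, Set.Finite.mem_toFinset]
            exact hs
      have hcount := card_le_cover₂ hcov
      have := hbag ts
      omega
    obtain ⟨U, hUN, hU1, hU2⟩ := greedy hm1 N F hsmall hbig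
    refine ⟨(U : Set T), ((N \ U : Finset T) : Set T), ?_, ?_, ?_, ?_⟩
    · ext x
      simp only [Set.mem_union, Finset.coe_sdiff, Set.mem_diff, Finset.mem_coe]
      constructor
      · rintro (hx | ⟨hx, -⟩)
        · have := hUN hx
          rwa [hN, Set.Finite.mem_toFinset] at this
        · rwa [hN, Set.Finite.mem_toFinset] at hx
      · intro hx
        by_cases hxU : x ∈ U
        · exact Or.inl hxU
        · refine Or.inr ⟨?_, hxU⟩
          rwa [hN, Set.Finite.mem_toFinset]
    · rw [Set.disjoint_left]
      intro a ha ha'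
      rw [Finset.coe_sdiff, Set.mem_diff] at ha'
      exact ha'.2 ha
    · rw [incident_biUnion]
      exact hU1
    · rw [incident_biUnion]
      exact hU2
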